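/- arXiv:2402.02770 — 3 statements merged into one kernel-verified Lean document; each statement's English description precedes it below -/
import Mathlib

section
/- Let A be the 4×4 matrix with rows (−δ/(cμ), 0, 1/c, 0), (a/(cμ), −R_s/(cμ), 0, 0), (0, 0, 0, 1), (0, −kαβλ/(μD_v), δ_v/(μD_v), c/D_v), all parameters positive. If δ > (1+c)μ, R_s − a > cμ, and c > D_v + δ_v/μ + kαβλ/μ, then the Geršgorin discs of rows 1 and 2 are disjoint from the Geršgorin discs of rows 3 and 4, and the discs of rows 3 and 4 are disjoint from each other. -/
lemma disc_disjoint (c1 c2 r1 r2 : ℝ) (h : r1 + r2 < |c1 - c2|) :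
    Disjoint {z : ℂ | ‖z - (c1:ℝ)‖ ≤ r1}
             {z : ℂ | ‖z - (c2:ℝ)‖ ≤ r2} := by
  rw [Set.disjoint_left]
  intro z h1 h2
  simp only [Set.mem_setOf_eq] at h1 h2
  have key : ‖(c1:ℂ) - c2‖ ≤ ‖z - c1‖ + ‖z - c2‖ := by
    calc ‖(c1:ℂ) - c2‖ ≤ ‖(c1:ℂ) - z‖ + ‖z - c2‖ :=
          norm_sub_le_norm_sub_add_norm_sub _ _ _
      _ = ‖z - c1‖ + ‖z - c2‖ := by rw [norm_sub_rev]
  rw [show ((c1:ℂ) - c2) = ((c1 - c2 : ℝ) : ℂ) by push_cast; ring, Complex.norm_real, Real.norm_eq_abs] at key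
  linarith



theorem gershgorin_discs_disjoint (a k lam α β μ δ δv Dv c Rs : ℝ)
    (ha : 0 < a) (hk : 0 < k) (hlam : 0 < lam) (hα : 0 < α) (hβ : 0 < β)
    (hμ : 0 < μ) (hδ : 0 < δ) (hδv : 0 < δv) (hDv : 0 < Dv) (hc : 0 < c)
    (hRs : 0 < Rs)
    (h1 : δ > (1 + c) * μ) (h2 : Rs - a > c * μ)
    (h3 : c > Dv + δv / μ + k * α * β * lam / μ) :
    let A : Matrix (Fin 4) (Fin 4) ℝ :=
      !![-δ / (c * μ), 0, 1 / c, 0;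
         a / (c * μ), -Rs / (c * μ), 0, 0;
         0, 0, 0, 1;
         0, -(k * α * β * lam) / (μ * Dv), δv / (μ * Dv), c / Dv]
    let G : Fin 4 → Set ℂ := fun i =>
      {z : ℂ | ‖z - (A i i : ℝ)‖ ≤
        ∑ j ∈ Finset.univ.erase i, |A i j|}
    Disjoint (G 0) (G 2) ∧ Disjoint (G 0) (G 3) ∧
    Disjoint (G 1) (G 2) ∧ Disjoint (G 1) (G 3) ∧
    Disjoint (G 2) (G 3) := by
  intro A G
  have hcμ : 0 < c * μ := mul_pos hc hμ
  have hμDv : 0 < μ * Dv := mul_pos hμ hDv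
  have hG0 : G 0 = {z : ℂ | ‖z - ((-δ / (c * μ) : ℝ) : ℂ)‖ ≤ 1 / c} := by
    have he : Finset.univ.erase (0 : Fin 4) = {1, 2, 3} := by decide
    simp only [G, A, he]
    ext z
    simp [abs_inv, abs_of_pos hc]
  have hG1 : G 1 = {z : ℂ | ‖z - ((-Rs / (c * μ) : ℝ) : ℂ)‖ ≤ a / (c * μ)} := by
    have he : Finset.univ.erase (1 : Fin 4) = {0, 2, 3} := by decide
    simp only [G, A, he]
    ext z
    simp [abs_of_nonneg (le_of_lt (div_pos ha hcμ))]
  have hG2 : G 2 = {z : ℂ | ‖z - ((0 : ℝ) : ℂ)‖ ≤ 1} := by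
    have he : Finset.univ.erase (2 : Fin 4) = {0, 1, 3} := by decide
    simp only [G, A, he]
    ext z
    simp
  have hG3 : G 3 = {z : ℂ | ‖z - ((c / Dv : ℝ) : ℂ)‖ ≤
      k * α * β * lam / (μ * Dv) + δv / (μ * Dv)} := by
    have he : Finset.univ.erase (3 : Fin 4) = {0, 1, 2} := by decide
    simp only [G, A, he]
    ext z
    have h4 : |(-(k * α * β * lam) / (μ * Dv))| = k * α * β * lam / (μ * Dv) := by
      rw [abs_div, abs_neg, abs_of_nonneg, abs_of_nonneg hμDv.le] <;> positivity
    have h5 : |δv / (μ * Dv)| = δv / (μ * Dv) := by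
      rw [abs_of_nonneg]; positivity
    simp [h4, h5]
  rw [hG0, hG1, hG2, hG3]
  have hA : δ / (c * μ) > 1 / c + 1 := by
    rw [gt_iff_lt, div_add' _ _ _ hc.ne', div_lt_div_iff₀ hc hcμ]
    nlinarith
  have hB : Rs / (c * μ) > a / (c * μ) + 1 := by
    rw [gt_iff_lt, div_add' _ _ _ hcμ.ne', div_lt_div_iff₀ hcμ hcμ]
    nlinarith
  have hC : c / Dv > 1 + (k * α * β * lam / (μ * Dv) + δv / (μ * Dv)) := by
    have e : 1 + (k * α * β * lam / (μ * Dv) + δv / (μ * Dv))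
        = (Dv + (k * α * β * lam / μ + δv / μ)) / Dv := by
      field_simp
    rw [gt_iff_lt, e]
    gcongr
    linarith
  refine ⟨disc_disjoint _ _ _ _ ?_, disc_disjoint _ _ _ _ ?_, disc_disjoint _ _ _ _ ?_,
    disc_disjoint _ _ _ _ ?_, disc_disjoint _ _ _ _ ?_⟩
  · rw [show (-δ / (c * μ) - 0 : ℝ) = -(δ / (c * μ)) by ring, abs_neg,
      abs_of_pos (div_pos hδ hcμ)]
    linarith
  · rw [show (-δ / (c * μ) - c / Dv : ℝ) = -(δ / (c * μ) + c / Dv) by ring, abs_neg,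
      abs_of_pos (by positivity)]
    linarith
  · rw [show (-Rs / (c * μ) - 0 : ℝ) = -(Rs / (c * μ)) by ring, abs_neg,
      abs_of_pos (div_pos hRs hcμ)]
    linarith
  · rw [show (-Rs / (c * μ) - c / Dv : ℝ) = -(Rs / (c * μ) + c / Dv) by ring, abs_neg,
      abs_of_pos (by positivity)]
    linarith
  · rw [show ((0 : ℝ) - c / Dv) = -(c / Dv) by ring, abs_neg, abs_of_pos (div_pos hc hDv)]
    linarith
end

section
/- Let A be an n×n real matrix and suppose one Geršgorin disc G_k of A is disjoint from all the other discs. Then A has exactly one eigenvalue (counted with algebraic multiplicity) in G_k, and this eigenvalue is real. -/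
open scoped Classical

open Polynomial Metric Complex

private lemma logderiv_aux (s : Multiset ℂ) (z : ℂ)
    (hz : eval z (s.map (fun r => X - C r)).prod ≠ 0) :
    eval z (derivative (s.map (fun r => X - C r)).prod)
      / eval z (s.map (fun r => X - C r)).prod
      = (s.map (fun r => (z - r)⁻¹)).sum := by
  induction s using Multiset.induction_on with
  | empty => simp
  | cons a s ih =>
    simp only [Multiset.map_cons, Multiset.prod_cons, Multiset.sum_cons] at hz ⊢
    rw [derivative_mul]
    simp only [eval_add, eval_mul, derivative_sub, derivative_X, derivative_C, sub_zero,
      eval_one, one_mul, eval_sub, eval_X, eval_C] at hz ⊢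
    have h1 : z - a ≠ 0 := fun h => hz (by rw [h, zero_mul])
    have h2 : eval z (s.map (fun r => X - C r)).prod ≠ 0 := fun h => hz (by rw [h, mul_zero])
    rw [← ih h2]
    field_simp

private lemma sumInv_integrable (s : Multiset ℂ) (c : ℂ) (ρ : ℝ) (hρ : 0 ≤ ρ)
    (h : ∀ r ∈ s, r ∉ sphere c ρ) :
    CircleIntegrable (fun z => (s.map (fun r => (z - r)⁻¹)).sum) c ρ := by
  induction s using Multiset.induction_on with
  | empty => simpa using circleIntegrable_const (0 : ℂ) c ρ
  | cons a s ih =>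
    simp only [Multiset.map_cons, Multiset.sum_cons]
    have ha : CircleIntegrable (fun z => (z - a)⁻¹) c ρ :=
      circleIntegrable_sub_inv_iff.mpr (Or.inr (by
        rw [_root_.abs_of_nonneg hρ]; exact h a (Multiset.mem_cons_self a s)))
    exact ha.add (ih fun r hr => h r (Multiset.mem_cons_of_mem hr))

private lemma circleIntegral_add' {f g : ℂ → ℂ} {c : ℂ} {ρ : ℝ}
    (hf : CircleIntegrable f c ρ) (hg : CircleIntegrable g c ρ) :
    (∮ z in C(c, ρ), (f z + g z)) = (∮ z in C(c, ρ), f z) + ∮ z in C(c, ρ), g z := by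
  simp only [circleIntegral, smul_add]
  exact intervalIntegral.integral_add ((circleIntegrable_iff ρ).mp hf)
    ((circleIntegrable_iff ρ).mp hg)

private lemma circleIntegral_sumInv (s : Multiset ℂ) (c : ℂ) (ρ : ℝ) (hρ : 0 < ρ)
    (h : ∀ r ∈ s, r ∉ sphere c ρ) :
    (∮ z in C(c, ρ), (s.map (fun r => (z - r)⁻¹)).sum)
      = 2 * Real.pi * Complex.I * ((s.filter (fun r => r ∈ ball c ρ)).card : ℂ) := by
  induction s using Multiset.induction_on with
  | empty => simp [circleIntegral]
  | cons a s ih =>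
    have ha : CircleIntegrable (fun z => (z - a)⁻¹) c ρ :=
      circleIntegrable_sub_inv_iff.mpr (Or.inr (by
        rw [_root_.abs_of_nonneg hρ.le]; exact h a (Multiset.mem_cons_self a s)))
    have hs : CircleIntegrable (fun z => (s.map (fun r => (z - r)⁻¹)).sum) c ρ :=
      sumInv_integrable s c ρ hρ.le fun r hr => h r (Multiset.mem_cons_of_mem hr)
    simp only [Multiset.map_cons, Multiset.sum_cons]
    rw [circleIntegral_add' ha hs, ih fun r hr => h r (Multiset.mem_cons_of_mem hr),
      Multiset.filter_cons]
    by_cases hmem : a ∈ ball c ρ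
    · rw [circleIntegral.integral_sub_inv_of_mem_ball hmem, if_pos hmem]
      simp only [Multiset.card_add, Multiset.card_singleton]
      push_cast
      ring
    · have ha' : a ∉ closedBall c ρ := by
        simp only [mem_ball, not_lt] at hmem
        have hne : dist a c ≠ ρ := fun h' =>
          h a (Multiset.mem_cons_self a s) (mem_sphere.mpr h')
        simp only [mem_closedBall, not_le]
        exact lt_of_le_of_ne hmem (Ne.symm hne)
      have hzero : (∮ z in C(c, ρ), (z - a)⁻¹) = 0 := by
        apply Complex.circleIntegral_eq_zero_of_differentiable_on_off_countable hρ.le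
          Set.countable_empty
        · intro z hz
          exact ContinuousAt.continuousWithinAt ((continuousAt_id.sub continuousAt_const).inv₀
              (sub_ne_zero.2 (ne_of_mem_of_not_mem hz ha')))
        · intro z hz
          exact ((differentiableAt_id.sub_const a).inv
            (sub_ne_zero.2 (ne_of_mem_of_not_mem (ball_subset_closedBall hz.1) ha')))
      rw [hzero, if_neg hmem]
      simp

private lemma count_roots_circleIntegral (p : Polynomial ℂ) (hm : p.Monic)
    (hc : Multiset.card p.roots = p.natDegree) (c : ℂ) (ρ : ℝ) (hρ : 0 < ρ)
    (h : ∀ r ∈ p.roots, r ∉ sphere c ρ) :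
    (∮ z in C(c, ρ), eval z (derivative p) / eval z p)
      = 2 * Real.pi * Complex.I * ((p.roots.filter (fun r => r ∈ ball c ρ)).card : ℂ) := by
  have hprod := prod_multiset_X_sub_C_of_monic_of_roots_card_eq hm hc
  rw [← circleIntegral_sumInv p.roots c ρ hρ h]
  refine circleIntegral.integral_congr hρ.le fun z hz => ?_
  have hz0 : eval z p ≠ 0 := by
    intro h0
    exact h z (Polynomial.mem_roots'.mpr ⟨hm.ne_zero, h0⟩) hz
  have := logderiv_aux p.roots z (by rw [hprod]; exact hz0)
  rw [hprod] at this
  exact this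

theorem isolated_gershgorin_disc_real_eigenvalue (n : ℕ)
    (A : Matrix (Fin n) (Fin n) ℝ) (k : Fin n)
    (G : Fin n → Set ℂ)
    (hG : ∀ i, G i = {z : ℂ | ‖z - (A i i : ℝ)‖ ≤
      ∑ j ∈ Finset.univ.erase i, |A i j|})
    (hdisj : ∀ j, j ≠ k → Disjoint (G k) (G j)) :
    (((A.map (Complex.ofReal)).charpoly.roots.filter (fun z => z ∈ G k)).card = 1) ∧
    (∀ z ∈ (A.map (Complex.ofReal)).charpoly.roots, z ∈ G k → z.im = 0) := by
  have hn : 0 < n := k.pos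
  set c : ℂ := ((A k k : ℝ) : ℂ) with hcdef
  set r : Fin n → ℝ := fun i => ∑ j ∈ Finset.univ.erase i, |A i j| with hrdef
  have hrnn : ∀ i, 0 ≤ r i := fun i => Finset.sum_nonneg fun j _ => abs_nonneg _
  have hGball : ∀ i, G i = closedBall ((A i i : ℝ) : ℂ) (r i) := by
    intro i
    rw [hG i]
    ext z
    simp [Metric.mem_closedBall, Complex.dist_eq, hrdef]
  have hsub : ∀ i, ((A i i : ℝ) : ℂ) ∈ G i := by
    intro i
    rw [hGball i]
    simpa using hrnn i
  -- family of matrices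
  set Mc : ℝ → Matrix (Fin n) (Fin n) ℂ := fun s => Matrix.of fun i j =>
    if i = j then ((A i i : ℝ) : ℂ) else (s : ℂ) * ((A i j : ℝ) : ℂ) with hMcdef
  have hMc1 : Mc 1 = A.map Complex.ofReal := by
    ext i j
    by_cases h : i = j <;> simp [hMcdef, Matrix.map_apply, h]
  -- location of roots
  have hloc : ∀ s : ℝ, s ∈ Set.Icc (0:ℝ) 1 → ∀ z ∈ (Mc s).charpoly.roots,
      ∃ i, dist z ((A i i : ℝ) : ℂ) ≤ r i := by
    intro s hs z hz
    have hz0 : Polynomial.IsRoot (Mc s).charpoly z := (Polynomial.mem_roots'.mp hz).2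
    have h1 : Polynomial.eval z (Mc s).charpoly
        = ((Mc s).charmatrix.map (Polynomial.evalRingHom z)).det := by
      rw [Matrix.charpoly,
        show Polynomial.eval z (Mc s).charmatrix.det
          = Polynomial.evalRingHom z (Mc s).charmatrix.det from rfl,
        RingHom.map_det, RingHom.mapMatrix_apply]
    have h2 : (Mc s).charmatrix.map (Polynomial.evalRingHom z)
        = z • (1 : Matrix (Fin n) (Fin n) ℂ) - Mc s := by
      ext i j
      by_cases hij : i = j <;>
        simp [Matrix.charmatrix_apply, Matrix.map_apply, Matrix.diagonal_apply, hij,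
          Matrix.one_apply, Matrix.sub_apply, Matrix.smul_apply]
    have hdet : (z • (1 : Matrix (Fin n) (Fin n) ℂ) - Mc s).det = 0 := by
      rw [← h2, ← h1]
      exact hz0
    have hdet2 : (Mc s - z • (1 : Matrix (Fin n) (Fin n) ℂ)).det = 0 := by
      rw [show Mc s - z • (1 : Matrix (Fin n) (Fin n) ℂ)
          = -(z • (1 : Matrix (Fin n) (Fin n) ℂ) - Mc s) by abel, Matrix.det_neg, hdet, mul_zero]
    obtain ⟨v, hv0, hv⟩ := Matrix.exists_mulVec_eq_zero_iff.mpr hdet2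
    have hev : (Matrix.toLin' (Mc s)) v = z • v := by
      rw [Matrix.toLin'_apply]
      rw [Matrix.sub_mulVec, Matrix.smul_mulVec, Matrix.one_mulVec, sub_eq_zero] at hv
      exact hv
    obtain ⟨i, hi⟩ := eigenvalue_mem_ball (Module.End.hasEigenvalue_of_hasEigenvector
      ⟨Module.End.mem_eigenspace_iff.mpr hev, hv0⟩)
    refine ⟨i, ?_⟩
    rw [Metric.mem_closedBall] at hi
    have hMii : (Mc s) i i = ((A i i : ℝ) : ℂ) := by simp [hMcdef]
    rw [hMii] at hi
    refine le_trans hi ?_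
    rw [hrdef]
    apply Finset.sum_le_sum
    intro j hj
    have hji : i ≠ j := fun h => (Finset.ne_of_mem_erase hj) h.symm
    have : (Mc s) i j = (s : ℂ) * ((A i j : ℝ) : ℂ) := by simp [hMcdef, hji]
    rw [this, norm_mul, Complex.norm_real, Complex.norm_real, Real.norm_eq_abs, Real.norm_eq_abs]
    have hs1 : |s| ≤ 1 := abs_le.mpr ⟨by linarith [hs.1], hs.2⟩
    nlinarith [abs_nonneg (A i j), abs_nonneg s]
  -- gap
  have hgap : ∀ j, j ≠ k → r k < dist ((A j j : ℝ) : ℂ) c - r j := by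
    intro j hj
    by_contra hle
    push_neg at hle
    set x : ℂ := ((A j j : ℝ) : ℂ) with hxdef
    set d : ℝ := dist x c with hddef
    have hdn : 0 ≤ d := dist_nonneg
    have hGk : G k = closedBall c (r k) := by rw [hGball k, hcdef]
    rcases le_or_gt d (r k) with hcase | hcase
    · exact Set.disjoint_left.mp (hdisj j hj)
        (by rw [hGk]; exact Metric.mem_closedBall.mpr hcase) (hsub j)
    · have hd0 : 0 < d := lt_of_le_of_lt (hrnn k) hcase
      set w : ℂ := c + ((r k / d : ℝ) : ℂ) * (x - c) with hwdef
      have hxc : ‖x - c‖ = d := by rw [hddef, dist_eq_norm]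
      have hw1 : dist w c = r k := by
        rw [dist_eq_norm, show w - c = ((r k / d : ℝ) : ℂ) * (x - c) by rw [hwdef]; ring,
          norm_mul, Complex.norm_real, Real.norm_eq_abs,
          _root_.abs_of_nonneg (div_nonneg (hrnn k) hd0.le), hxc]
        field_simp
      have hw2 : dist w x ≤ r j := by
        rw [dist_eq_norm, show w - x = (((r k / d - 1 : ℝ)) : ℂ) * (x - c) by
          rw [hwdef]; push_cast; ring,
          norm_mul, Complex.norm_real, Real.norm_eq_abs]
        have ht1 : r k / d ≤ 1 := (div_le_one hd0).mpr hcase.le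
        rw [_root_.abs_of_nonpos (by linarith), hxc]
        have : (1 - r k / d) * d = d - r k := by field_simp
        rw [neg_sub, this]
        linarith
      exact Set.disjoint_left.mp (hdisj j hj)
        (by rw [hGk]; exact Metric.mem_closedBall.mpr hw1.le)
        (by rw [hGball j]; exact Metric.mem_closedBall.mpr hw2)
  -- radius
  set S := Finset.univ.erase k with hSdef
  set δ : ℝ := if hS : S.Nonempty then S.inf' hS (fun j => dist ((A j j : ℝ) : ℂ) c - r j)
    else r k + 1 with hδdef
  have hδgt : r k < δ := by
    rw [hδdef]
    split_ifs with hS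
    · exact (Finset.lt_inf'_iff hS).mpr fun j hj => hgap j (Finset.ne_of_mem_erase hj)
    · linarith
  have hδle : ∀ j, j ≠ k → δ ≤ dist ((A j j : ℝ) : ℂ) c - r j := by
    intro j hj
    have hjS : j ∈ S := Finset.mem_erase.mpr ⟨hj, Finset.mem_univ j⟩
    rw [hδdef, dif_pos ⟨j, hjS⟩]
    exact Finset.inf'_le _ hjS
  set ρ : ℝ := (r k + δ) / 2 with hρdef
  have hρ1 : r k < ρ := by rw [hρdef]; linarith
  have hρ2 : ρ < δ := by rw [hρdef]; linarith
  have hρpos : 0 < ρ := lt_of_le_of_lt (hrnn k) hρ1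
  -- trichotomy
  have htri : ∀ s : ℝ, s ∈ Set.Icc (0:ℝ) 1 → ∀ z ∈ (Mc s).charpoly.roots,
      (z ∈ G k ∧ dist z c < ρ) ∨ (ρ < dist z c ∧ z ∉ G k) := by
    intro s hs z hz
    obtain ⟨i, hi⟩ := hloc s hs z hz
    by_cases hik : i = k
    · subst hik
      left
      exact ⟨(hGball i) ▸ Metric.mem_closedBall.mpr hi, lt_of_le_of_lt hi hρ1⟩
    · right
      have hzi : z ∈ G i := (hGball i) ▸ Metric.mem_closedBall.mpr hi
      have h1 : dist ((A i i : ℝ) : ℂ) c ≤ dist ((A i i : ℝ) : ℂ) z + dist z c :=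
        dist_triangle _ _ _
      have h2 : δ ≤ dist ((A i i : ℝ) : ℂ) c - r i := hδle i hik
      have h3 : dist ((A i i : ℝ) : ℂ) z = dist z ((A i i : ℝ) : ℂ) := dist_comm _ _
      refine ⟨by linarith, fun hzk => Set.disjoint_left.mp (hdisj i hik) hzk hzi⟩
  have hsphere : ∀ s : ℝ, s ∈ Set.Icc (0:ℝ) 1 → ∀ z ∈ (Mc s).charpoly.roots,
      z ∉ sphere c ρ := by
    intro s hs z hz hmem
    rw [mem_sphere] at hmem
    rcases htri s hs z hz with ⟨_, h⟩ | ⟨h, _⟩ <;> rw [hmem] at h <;> exact lt_irrefl _ h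
  -- charpoly facts
  have hmon : ∀ s : ℝ, (Mc s).charpoly.Monic := fun s => Matrix.charpoly_monic _
  have hdeg : ∀ s : ℝ, (Mc s).charpoly.natDegree = n := fun s => by
    rw [Matrix.charpoly_natDegree_eq_dim, Fintype.card_fin]
  have hcard : ∀ s : ℝ, Multiset.card (Mc s).charpoly.roots = (Mc s).charpoly.natDegree :=
    fun s => Polynomial.splits_iff_card_roots.mp (IsAlgClosed.splits _)
  -- count function and key identity
  set cnt : ℝ → ℕ := fun s => Multiset.card ((Mc s).charpoly.roots.filter (fun z => z ∈ G k))
    with hcntdef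
  have hfeq : ∀ s : ℝ, s ∈ Set.Icc (0:ℝ) 1 →
      (Mc s).charpoly.roots.filter (fun z => z ∈ ball c ρ)
        = (Mc s).charpoly.roots.filter (fun z => z ∈ G k) := by
    intro s hs
    refine Multiset.filter_congr fun z hz => ?_
    rcases htri s hs z hz with ⟨h1, h2⟩ | ⟨h1, h2⟩
    · simp [Metric.mem_ball, h2, h1]
    · simp [Metric.mem_ball, not_lt.mpr h1.le, h2]
  set F : ℝ → ℂ := fun s => ∮ z in C(c, ρ),
    eval z (derivative (Mc s).charpoly) / eval z (Mc s).charpoly with hFdef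
  have hkey : ∀ s : ℝ, s ∈ Set.Icc (0:ℝ) 1 →
      F s = 2 * Real.pi * Complex.I * (cnt s : ℂ) := by
    intro s hs
    rw [hFdef]
    simp only
    rw [count_roots_circleIntegral _ (hmon s) (hcard s) c ρ hρpos (hsphere s hs),
      hfeq s hs]
  -- continuity
  have hne0 : ∀ s ∈ Set.Icc (0:ℝ) 1, ∀ θ : ℝ, eval (circleMap c ρ θ) (Mc s).charpoly ≠ 0 :=
    fun s hs θ h0 => hsphere s hs _ (Polynomial.mem_roots'.mpr ⟨(hmon s).ne_zero, h0⟩)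
      (circleMap_mem_sphere c hρpos.le θ)
  have hFcont : ContinuousOn F (Set.Icc (0:ℝ) 1) := by
    -- polynomial-in-parameter matrix
    set B : Matrix (Fin n) (Fin n) (Polynomial ℝ) := Matrix.of fun i j =>
      if i = j then Polynomial.C (A i i) else Polynomial.C (A i j) * Polynomial.X with hBdef
    have hchar : ∀ s : ℝ, (Mc s).charpoly
        = (B.charpoly.map (Polynomial.evalRingHom s)).map Complex.ofRealHom := by
      intro s
      have h1 : Mc s = (B.map ⇑(Polynomial.evalRingHom s)).map ⇑Complex.ofRealHom := by
        rw [hMcdef, hBdef]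
        ext i j
        simp only [Matrix.map_apply, Matrix.of_apply]
        by_cases h : i = j
        · subst h
          simp
        · rw [if_neg h, if_neg h]
          simp only [map_mul, Polynomial.eval_C, Polynomial.eval_X, Polynomial.coe_evalRingHom,
            Complex.ofRealHom_eq_coe, Complex.ofReal_mul]
          ring
      rw [h1, Matrix.charpoly_map, Matrix.charpoly_map]
    set co : ℕ → ℝ → ℂ := fun i s => (((B.charpoly.coeff i).eval s : ℝ) : ℂ) with hcodef
    have hco : ∀ (s : ℝ) (i : ℕ), (Mc s).charpoly.coeff i = co i s := by
      intro s i
      rw [hchar s]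
      simp [Polynomial.coeff_map, hcodef]
    have hcoc : ∀ i, Continuous (co i) :=
      fun i => Complex.continuous_ofReal.comp (Polynomial.continuous _)
    have hEv : ∀ (s : ℝ) (z : ℂ), eval z (Mc s).charpoly
        = ∑ i ∈ Finset.range (n+1), co i s * z ^ i := by
      intro s z
      rw [Polynomial.eval_eq_sum_range' (by rw [hdeg s]; exact Nat.lt_succ_self n)]
      exact Finset.sum_congr rfl fun i _ => by rw [hco]
    have hEv' : ∀ (s : ℝ) (z : ℂ), eval z (derivative (Mc s).charpoly)
        = ∑ i ∈ Finset.range (n+1), (co (i+1) s * ((i:ℂ)+1)) * z ^ i := by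
      intro s z
      rw [Polynomial.eval_eq_sum_range'
        (lt_of_le_of_lt (Polynomial.natDegree_derivative_le _)
          (by rw [hdeg s]; exact lt_of_le_of_lt (Nat.sub_le n 1) (Nat.lt_succ_self n)))]
      refine Finset.sum_congr rfl fun i _ => ?_
      rw [Polynomial.coeff_derivative, hco]
    rw [continuousOn_iff_continuous_restrict]
    have hre : (Set.Icc (0:ℝ) 1).domRestrict F = fun x : (Set.Icc (0:ℝ) 1) =>
        ∫ θ in (0:ℝ)..(2 * Real.pi),
          (circleMap 0 ρ θ * Complex.I) *
            ((∑ i ∈ Finset.range (n+1), (co (i+1) (x : ℝ) * ((i:ℂ)+1)) * (circleMap c ρ θ) ^ i)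
              / (∑ i ∈ Finset.range (n+1), co i (x : ℝ) * (circleMap c ρ θ) ^ i)) := by
      funext x
      simp only [Set.domRestrict_apply, hFdef, circleIntegral, deriv_circleMap, smul_eq_mul]
      congr 1
      funext θ
      rw [hEv, hEv']
    rw [hre]
    apply intervalIntegral.continuous_parametric_intervalIntegral_of_continuous'
    have hmap : Continuous fun p : (Set.Icc (0:ℝ) 1) × ℝ => circleMap c ρ p.2 :=
      (continuous_circleMap c ρ).comp continuous_snd
    have hval : Continuous fun p : (Set.Icc (0:ℝ) 1) × ℝ => (p.1 : ℝ) :=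
      continuous_subtype_val.comp continuous_fst
    have hnum : Continuous fun p : (Set.Icc (0:ℝ) 1) × ℝ =>
        ∑ i ∈ Finset.range (n+1), (co (i+1) (p.1 : ℝ) * ((i:ℂ)+1)) * (circleMap c ρ p.2) ^ i :=
      continuous_finset_sum _ fun i _ =>
        ((((hcoc (i+1)).comp hval).mul continuous_const).mul (hmap.pow i))
    have hden : Continuous fun p : (Set.Icc (0:ℝ) 1) × ℝ =>
        ∑ i ∈ Finset.range (n+1), co i (p.1 : ℝ) * (circleMap c ρ p.2) ^ i :=
      continuous_finset_sum _ fun i _ => (((hcoc i).comp hval).mul (hmap.pow i))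
    have hdenne : ∀ p : (Set.Icc (0:ℝ) 1) × ℝ,
        (∑ i ∈ Finset.range (n+1), co i (p.1 : ℝ) * (circleMap c ρ p.2) ^ i) ≠ 0 := by
      intro p
      rw [← hEv]
      exact hne0 p.1 p.1.2 p.2
    show Continuous (Function.uncurry fun (x : (Set.Icc (0:ℝ) 1)) (θ : ℝ) =>
      (circleMap 0 ρ θ * Complex.I) * _)
    apply Continuous.mul
    · exact (((continuous_circleMap 0 ρ).comp continuous_snd).mul continuous_const)
    · exact hnum.div hden hdenne
  -- value at 0
  have hcnt0 : cnt 0 = 1 := by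
    show Multiset.card ((Mc 0).charpoly.roots.filter (fun z => z ∈ G k)) = 1
    have hM0 : Mc 0 = Matrix.diagonal (fun i => ((A i i : ℝ) : ℂ)) := by
      ext i j
      by_cases h : i = j <;> simp [hMcdef, Matrix.diagonal_apply, h]
    have hcm : (Mc 0).charpoly
        = ((Finset.univ.val.map fun i => ((A i i : ℝ) : ℂ)).map fun a => X - C a).prod := by
      rw [hM0, Matrix.charpoly]
      have h2 : (Matrix.diagonal fun i => ((A i i : ℝ) : ℂ)).charmatrix
          = Matrix.diagonal (fun i => (X : Polynomial ℂ) - C ((A i i : ℝ) : ℂ)) := by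
        ext i j
        by_cases h : i = j <;>
          simp [Matrix.charmatrix_apply, Matrix.diagonal_apply, h]
      rw [h2, Matrix.det_diagonal, Finset.prod_eq_multiset_prod, Multiset.map_map]
      rfl
    have hroots : (Mc 0).charpoly.roots = Finset.univ.val.map fun i => ((A i i : ℝ) : ℂ) := by
      rw [hcm, Polynomial.roots_multiset_prod_X_sub_C]
    rw [hroots, Multiset.filter_map, Multiset.card_map]
    have hfk : Multiset.filter ((fun z => z ∈ G k) ∘ fun i => ((A i i : ℝ) : ℂ)) Finset.univ.val
        = (Finset.filter (fun i => ((A i i : ℝ) : ℂ) ∈ G k) Finset.univ).val := by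
      rw [Finset.filter_val]
      rfl
    rw [hfk]
    have : Finset.filter (fun i => ((A i i : ℝ) : ℂ) ∈ G k) Finset.univ = {k} := by
      ext i
      simp only [Finset.mem_filter, Finset.mem_univ, true_and, Finset.mem_singleton]
      constructor
      · intro hik
        by_contra hne
        exact Set.disjoint_left.mp (hdisj i hne) hik (hsub i)
      · intro h
        exact h ▸ hsub i
    rw [this]
    rfl
  -- value at 1 by connectedness
  have hπ : (2 * Real.pi * Complex.I : ℂ) ≠ 0 := by
    simp [Real.pi_ne_zero, Complex.I_ne_zero]
  set g : ℝ → ℝ := fun s => ((F s) / (2 * Real.pi * Complex.I)).re with hgdef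
  have hgcont : ContinuousOn g (Set.Icc (0:ℝ) 1) :=
    Complex.continuous_re.comp_continuousOn (hFcont.div_const _)
  have hgval : ∀ s ∈ Set.Icc (0:ℝ) 1, g s = (cnt s : ℝ) := by
    intro s hs
    rw [hgdef]
    simp only
    rw [hkey s hs, mul_comm, mul_div_assoc, div_self hπ, mul_one]
    simp
  have hcnt1 : cnt 1 = 1 := by
    by_contra hne
    have h01 : (0:ℝ) ≤ 1 := by norm_num
    have hg0 : g 0 = 1 := by
      rw [hgval 0 (by norm_num), hcnt0]; norm_num
    have hg1 : g 1 = (cnt 1 : ℝ) := hgval 1 (by norm_num)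
    rcases Nat.lt_or_ge (cnt 1) 1 with hlt | hge
    · have h10 : cnt 1 = 0 := Nat.lt_one_iff.mp hlt
      have hmem : (1/2 : ℝ) ∈ Set.Icc (g 1) (g 0) := by
        rw [hg0, hg1, h10]; norm_num
      obtain ⟨s, hs, hgs⟩ := intermediate_value_Icc' h01 hgcont hmem
      have : (cnt s : ℝ) = 1/2 := by rw [← hgval s hs]; exact hgs
      have h2 : (2 * cnt s : ℕ) = 1 := by exact_mod_cast (by linarith : (2 * (cnt s : ℝ)) = 1)
      omega
    · have hge2 : 2 ≤ cnt 1 := by omega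
      have hmem : (3/2 : ℝ) ∈ Set.Icc (g 0) (g 1) := by
        rw [hg0, hg1]
        constructor
        · norm_num
        · have : (2 : ℝ) ≤ (cnt 1 : ℝ) := by exact_mod_cast hge2
          linarith
      obtain ⟨s, hs, hgs⟩ := intermediate_value_Icc h01 hgcont hmem
      have : (cnt s : ℝ) = 3/2 := by rw [← hgval s hs]; exact hgs
      have h2 : (2 * cnt s : ℕ) = 3 := by exact_mod_cast (by linarith : (2 * (cnt s : ℝ)) = 3)
      omega
  have hmain : ((A.map Complex.ofReal).charpoly.roots.filter (fun z => z ∈ G k)).card = 1 := by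
    rw [← hMc1]
    exact hcnt1
  refine ⟨hmain, ?_⟩
  -- realness
  intro z hz hzG
  by_contra him
  have hpmap : (A.map Complex.ofReal).charpoly = (A.charpoly).map Complex.ofRealHom := by
    rw [show (A.map Complex.ofReal) = A.map ⇑Complex.ofRealHom from rfl, Matrix.charpoly_map]
  have hcomp : (starRingEnd ℂ).comp Complex.ofRealHom = Complex.ofRealHom :=
    RingHom.ext fun x => Complex.conj_ofReal x
  have hconj_eval : eval ((starRingEnd ℂ) z) ((A.charpoly).map Complex.ofRealHom)
      = (starRingEnd ℂ) (eval z ((A.charpoly).map Complex.ofRealHom)) := by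
    rw [Polynomial.eval_map, Polynomial.eval_map, Polynomial.hom_eval₂, hcomp]
  have hzroot : Polynomial.IsRoot (A.map Complex.ofReal).charpoly z :=
    (Polynomial.mem_roots'.mp hz).2
  have hconj_root : (starRingEnd ℂ) z ∈ (A.map Complex.ofReal).charpoly.roots := by
    refine Polynomial.mem_roots'.mpr ⟨(Matrix.charpoly_monic _).ne_zero, ?_⟩
    rw [Polynomial.IsRoot, hpmap, hconj_eval, ← hpmap, hzroot]
    simp
  have hconjG : (starRingEnd ℂ) z ∈ G k := by
    rw [hGball k] at hzG ⊢
    rw [Metric.mem_closedBall, Complex.dist_eq] at hzG ⊢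
    rw [show (starRingEnd ℂ) z - ((A k k : ℝ) : ℂ) = (starRingEnd ℂ) (z - ((A k k : ℝ) : ℂ)) by
      rw [map_sub, Complex.conj_ofReal], Complex.norm_conj]
    exact hzG
  have hne : z ≠ (starRingEnd ℂ) z := fun h => him (Complex.conj_eq_iff_im.mp h.symm)
  set m := (A.map Complex.ofReal).charpoly.roots.filter (fun z => z ∈ G k) with hmdef
  have hz1 : z ∈ m := Multiset.mem_filter.mpr ⟨hz, hzG⟩
  have hz2 : (starRingEnd ℂ) z ∈ m := Multiset.mem_filter.mpr ⟨hconj_root, hconjG⟩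
  have hsubm : ({z, (starRingEnd ℂ) z} : Finset ℂ) ⊆ m.toFinset := by
    intro w hw
    rcases Finset.mem_insert.mp hw with h | h
    · exact Multiset.mem_toFinset.mpr (h ▸ hz1)
    · exact Multiset.mem_toFinset.mpr ((Finset.mem_singleton.mp h) ▸ hz2)
  have h2le : 2 ≤ Multiset.card m := by
    calc 2 = ({z, (starRingEnd ℂ) z} : Finset ℂ).card := (Finset.card_pair hne).symm
    _ ≤ m.toFinset.card := Finset.card_le_card hsubm
    _ ≤ Multiset.card m := Multiset.toFinset_card_le m
  rw [hmain] at h2le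
  omega
end

section
/- Under the conditions δ > (1+c)μ, R_s − a > cμ, and c > D_v + δ_v/μ + kαβλ/μ (all parameters positive), the 4×4 matrix A with rows (−δ/(cμ), 0, 1/c, 0), (a/(cμ), −R_s/(cμ), 0, 0), (0, 0, 0, 1), (0, −kαβλ/(μD_v), δ_v/(μD_v), c/D_v) has at least one real eigenvalue λ > 1 (in particular a positive real eigenvalue), and no eigenvalue with positive real part lies outside the half-plane {Re z > 1} except possibly one real eigenvalue in the disc centered at 0 of radius 1. -/
open Polynomial Matrix Complex

lemma lem_eSig (x y d0 r1 : ℝ) :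
    ((x+d0)*(x+r1))^2 ≤ ((x+d0)*(x+r1) - y^2)^2 + y^2*(2*x+d0+r1)^2 := by
  nlinarith [sq_nonneg (y^2),
    mul_nonneg (sq_nonneg y) (add_nonneg (sq_nonneg (x+d0)) (sq_nonneg (x+r1)))]

lemma lem_ecuv (x d0 r1 a1 c : ℝ) (hc : 0 < c) (ha1 : 0 < a1) (hx : 0 < x)
    (hd0 : c + 1 < c * d0) (hr1 : 1 + a1 < r1) :
    a1 < c * ((x+d0)*(x+r1)) := by
  nlinarith [mul_pos (show (0:ℝ) < c*x + c*d0 - (c+1) by nlinarith)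
    (show (0:ℝ) < r1 - 1 - a1 by linarith), mul_pos hc hx,
    mul_pos (mul_pos hc hx) (show (0:ℝ) < r1 by linarith)]

set_option maxHeartbeats 1000000 in
lemma aux_no_nonreal (x y d0 r1 C Dd K a1 c E : ℝ) (hc : 0 < c) (ha1 : 0 < a1)
    (hDd : 0 < Dd) (hK : 0 < K) (hd0 : c + 1 < c * d0) (hr1 : 1 + a1 < r1)
    (hC : 1 + Dd + K < C) (hx : 0 < x) (hx1 : x ≤ 1)
    (hcE : c * E = a1 * K)
    (hI : ((x+d0)*(x+r1) - y^2) * (2*x - C) = (2*x+d0+r1) * (C*x + Dd + y^2 - x^2))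
    (hII : ((x+d0)*(x+r1) - y^2) * (C*x + Dd + y^2 - x^2) + y^2*(2*x+d0+r1)*(2*x - C) = E) :
    False := by
  have hd0pos : 1 < d0 := by
    by_contra h; push_neg at h
    have := mul_le_mul_of_nonneg_left h hc.le
    simp only [mul_one] at this; linarith
  have hr1pos : 1 < r1 := by linarith
  have hEpos : 0 < E := by
    by_contra h; push_neg at h
    linarith [mul_pos ha1 hK, mul_nonpos_of_nonneg_of_nonpos hc.le h, hcE]
  have hS : 0 < 2*x + d0 + r1 := by linarith
  have hW : 0 < C*x + Dd + y^2 - x^2 := by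
    linarith [mul_pos hx (show (0:ℝ) < C - x by linarith), sq_nonneg y]
  have hSW : 0 < (2*x+d0+r1) * (C*x + Dd + y^2 - x^2) := mul_pos hS hW
  have hQm : 0 < ((x+d0)*(x+r1) - y^2) * (2*x - C) := by rw [hI]; exact hSW
  have hQ : 0 < (x+d0)*(x+r1) - y^2 := by
    by_contra h; push_neg at h
    have hQlt : (x+d0)*(x+r1) - y^2 < 0 := by
      rcases lt_or_eq_of_le h with h'|h'
      · exact h'
      · rw [h'] at hQm; simp at hQm
    have hmlt : 2*x - C < 0 := by
      by_contra h2; push_neg at h2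
      linarith [mul_nonpos_of_nonpos_of_nonneg hQlt.le h2]
    linarith [mul_neg_of_neg_of_pos hQlt hW,
      mul_nonpos_of_nonneg_of_nonpos (mul_nonneg (sq_nonneg y) hS.le) hmlt.le, hEpos, hII]
  have hm : 0 < 2*x - C := by
    by_contra h; push_neg at h
    linarith [mul_nonpos_of_nonneg_of_nonpos hQ.le h]
  have hB : 0 < ((x+d0)*(x+r1) - y^2) + (2*x+d0+r1)*x := by
    linarith [mul_pos hS hx]
  have hIII : E * (((x+d0)*(x+r1) - y^2) + (2*x+d0+r1)*x)
      = (x^2+y^2+Dd) * (((x+d0)*(x+r1) - y^2)^2 + y^2*(2*x+d0+r1)^2) := by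
    linear_combination (-((((x+d0)*(x+r1) - y^2)) + (2*x+d0+r1)*x)) * hII
      + (y^2*(2*x+d0+r1) - x*((x+d0)*(x+r1) - y^2)) * hI
  have hIV : (2*x - C) * (((x+d0)*(x+r1) - y^2) + (2*x+d0+r1)*x)
      = (2*x+d0+r1) * (x^2+y^2+Dd) := by
    linear_combination hI
  have step1 : c * ((x^2+y^2+Dd) * (((x+d0)*(x+r1) - y^2)^2 + y^2*(2*x+d0+r1)^2))
      = a1 * K * (((x+d0)*(x+r1) - y^2) + (2*x+d0+r1)*x) := by
    rw [← hIII]; linear_combination (((x+d0)*(x+r1) - y^2) + (2*x+d0+r1)*x) * hcE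
  have step2 : a1 * K * (((x+d0)*(x+r1) - y^2) + (2*x+d0+r1)*x)
      < a1 * (C - 1 - Dd) * (((x+d0)*(x+r1) - y^2) + (2*x+d0+r1)*x) :=
    mul_lt_mul_of_pos_right (mul_lt_mul_of_pos_left (by linarith) ha1) hB
  have step3 : a1 * (C - 1 - Dd) * (((x+d0)*(x+r1) - y^2) + (2*x+d0+r1)*x)
      = a1 * (2*x - 1 - Dd) * (((x+d0)*(x+r1) - y^2) + (2*x+d0+r1)*x)
        - a1 * ((2*x+d0+r1) * (x^2+y^2+Dd)) := by
    linear_combination (-a1) * hIV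
  have step4 : a1 * (2*x - 1 - Dd) * (((x+d0)*(x+r1) - y^2) + (2*x+d0+r1)*x)
      ≤ a1 * x^2 * (((x+d0)*(x+r1) - y^2) + (2*x+d0+r1)*x) :=
    mul_le_mul_of_nonneg_right
      (mul_le_mul_of_nonneg_left (by linarith [sq_nonneg (x-1)]) ha1.le) hB.le
  have eSig := lem_eSig x y d0 r1
  have ecuv := lem_ecuv x d0 r1 a1 c hc ha1 hx hd0 hr1
  have huv : 0 < (x+d0)*(x+r1) :=
    mul_pos (by linarith) (by linarith)
  have hTx : x^2 ≤ x^2+y^2+Dd := by linarith [sq_nonneg y]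
  have hTx3 : x^3 ≤ x^2+y^2+Dd := by
    linarith [sq_nonneg y, mul_nonneg (sq_nonneg x) (sub_nonneg.mpr hx1)]
  have expand : a1 * x^2 * (((x+d0)*(x+r1) - y^2) + (2*x+d0+r1)*x)
      = a1 * x^2 * ((x+d0)*(x+r1) - y^2) + a1 * (x^3 * (2*x+d0+r1)) := by ring
  have t1 : a1 * x^2 * ((x+d0)*(x+r1) - y^2) ≤ a1 * x^2 * ((x+d0)*(x+r1)) :=
    mul_le_mul_of_nonneg_left (by linarith [sq_nonneg y]) (by positivity)
  have t2 : a1 * (x^2 * ((x+d0)*(x+r1))) ≤ c * x^2 * ((x+d0)*(x+r1))^2 := by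
    have h := mul_le_mul_of_nonneg_left ecuv.le
      (mul_nonneg (sq_nonneg x) huv.le)
    -- h : (x^2*uv) * a1 ≤ (x^2*uv) * (c*uv)
    linarith [h]
  have t3 : c * x^2 * ((x+d0)*(x+r1))^2
      ≤ c * x^2 * (((x+d0)*(x+r1) - y^2)^2 + y^2*(2*x+d0+r1)^2) :=
    mul_le_mul_of_nonneg_left eSig (by positivity)
  have hSigpos : 0 < ((x+d0)*(x+r1) - y^2)^2 + y^2*(2*x+d0+r1)^2 :=
    lt_of_lt_of_le (pow_pos huv 2) eSig
  have t4 : c * x^2 * (((x+d0)*(x+r1) - y^2)^2 + y^2*(2*x+d0+r1)^2)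
      ≤ c * ((x^2+y^2+Dd) * (((x+d0)*(x+r1) - y^2)^2 + y^2*(2*x+d0+r1)^2)) := by
    have h := mul_le_mul_of_nonneg_right
      (mul_le_mul_of_nonneg_left hTx hc.le) hSigpos.le
    linarith [h]
  have t5 : a1 * (x^3 * (2*x+d0+r1)) ≤ a1 * ((2*x+d0+r1) * (x^2+y^2+Dd)) := by
    have h := mul_le_mul_of_nonneg_left hTx3 (mul_nonneg ha1.le hS.le)
    linarith [h]
  linarith [step1, step2, step3, step4, expand, t1, t2, t3, t4, t5]


set_option maxHeartbeats 1000000 in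
lemma charpoly_eval_aux (p0 q p1 p2 r s t : ℂ) (z : ℂ) :
    (!![p0, 0, q, 0; p1, p2, 0, 0; 0,0,0,(1:ℂ); 0, r, s, t]).charpoly.eval z =
      (z - p0) * (z - p2) * (z^2 - t*z - s) - q * p1 * r := by
  rw [Matrix.charpoly, _root_.eval_det, matPolyEquiv_charmatrix]
  simp only [eval_sub, eval_pow, eval_X, eval_C, map_sub]
  rw [show (Matrix.scalar (Fin 4) z - !![p0, 0, q, 0; p1, p2, 0, 0; 0,0,0,(1:ℂ); 0, r, s, t]) =
    !![z - p0, 0, -q, 0;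
       -p1, z - p2, 0, 0;
       0, 0, z, -1;
       0, -r, -s, z - t] from by
    ext i j; fin_cases i <;> fin_cases j <;>
      simp [Matrix.scalar_apply, Matrix.diagonal_apply, Matrix.sub_apply,
        Matrix.vecHead, Matrix.vecTail]]
  simp [Matrix.det_succ_row_zero, Fin.sum_univ_succ, Fin.succAbove,
    Matrix.vecHead, Matrix.vecTail]
  ring

set_option maxHeartbeats 1000000 in
theorem positive_real_eigenvalue_exists (a k lam α β μ δ δv Dv c Rs : ℝ)
    (ha : 0 < a) (hk : 0 < k) (hlam : 0 < lam) (hα : 0 < α) (hβ : 0 < β)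
    (hμ : 0 < μ) (hδ : 0 < δ) (hδv : 0 < δv) (hDv : 0 < Dv) (hc : 0 < c)
    (hRs : 0 < Rs)
    (h1 : δ > (1 + c) * μ) (h2 : Rs - a > c * μ)
    (h3 : c > Dv + δv / μ + k * α * β * lam / μ) :
    let A : Matrix (Fin 4) (Fin 4) ℝ :=
      !![-δ / (c * μ), 0, 1 / c, 0;
         a / (c * μ), -Rs / (c * μ), 0, 0;
         0, 0, 0, 1;
         0, -(k * α * β * lam) / (μ * Dv), δv / (μ * Dv), c / Dv]
    (∃ t : ℝ, 1 < t ∧ (A.map Complex.ofReal).charpoly.IsRoot (t : ℂ)) ∧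
    (∀ z : ℂ, (A.map Complex.ofReal).charpoly.IsRoot z → 0 < z.re →
      (1 < z.re ∨ (z.im = 0 ∧ ‖z‖ ≤ 1))) := by
  intro A
  have hA : A = !![-δ / (c * μ), 0, 1 / c, 0;
         a / (c * μ), -Rs / (c * μ), 0, 0;
         0, 0, 0, 1;
         0, -(k * α * β * lam) / (μ * Dv), δv / (μ * Dv), c / Dv] := rfl
  obtain ⟨d0, hd0def⟩ : ∃ x : ℝ, x = δ / (c*μ) := ⟨_, rfl⟩
  obtain ⟨r1, hr1def⟩ : ∃ x : ℝ, x = Rs / (c*μ) := ⟨_, rfl⟩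
  obtain ⟨a1, ha1def⟩ : ∃ x : ℝ, x = a / (c*μ) := ⟨_, rfl⟩
  obtain ⟨C2, hC2def⟩ : ∃ x : ℝ, x = c / Dv := ⟨_, rfl⟩
  obtain ⟨Dd, hDddef⟩ : ∃ x : ℝ, x = δv / (μ*Dv) := ⟨_, rfl⟩
  obtain ⟨K, hKdef⟩ : ∃ x : ℝ, x = k*α*β*lam / (μ*Dv) := ⟨_, rfl⟩
  obtain ⟨E, hEdef⟩ : ∃ x : ℝ, x = a1 * K / c := ⟨_, rfl⟩
  have hcμ : 0 < c*μ := by positivity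
  have ha1pos : 0 < a1 := by rw [ha1def]; positivity
  have hKpos : 0 < K := by rw [hKdef]; positivity
  have hDdpos : 0 < Dd := by rw [hDddef]; positivity
  have hEpos : 0 < E := by rw [hEdef]; positivity
  have hd0c : c + 1 < c * d0 := by
    rw [hd0def, show c * (δ/(c*μ)) = δ/μ by field_simp; try ring, lt_div_iff₀ hμ]
    nlinarith
  have hr1a : 1 + a1 < r1 := by
    rw [ha1def, hr1def, ← sub_pos,
      show Rs/(c*μ) - (1 + a/(c*μ)) = (Rs - a - c*μ)/(c*μ) by field_simp; try ring]
    exact div_pos (by linarith) hcμ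
  have hCa : 1 + Dd + K < C2 := by
    rw [hDddef, hKdef, hC2def, ← sub_pos,
      show c/Dv - (1 + δv/(μ*Dv) + k*α*β*lam/(μ*Dv))
        = (c*μ - (Dv*μ + δv + k*α*β*lam))/(μ*Dv) by field_simp; try ring]
    apply div_pos _ (by positivity)
    have h3' := mul_lt_mul_of_pos_right h3 hμ
    rw [show (Dv + δv/μ + k*α*β*lam/μ)*μ = Dv*μ + δv + k*α*β*lam by field_simp; try ring] at h3'
    linarith
  have hcE : c * E = a1 * K := by rw [hEdef]; field_simp
  have hd0pos : 0 < d0 := by rw [hd0def]; positivity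
  have hr1pos : 0 < r1 := by rw [hr1def]; positivity
  have hC2pos : 0 < C2 := by rw [hC2def]; positivity
  -- characteristic polynomial evaluation
  have hchar : ∀ z : ℂ, ((A.map Complex.ofReal).charpoly).eval z
      = (z + (d0:ℂ)) * (z + (r1:ℂ)) * (z^2 - (C2:ℂ)*z - (Dd:ℂ)) + (E:ℂ) := by
    intro z
    have hA2 : A.map Complex.ofReal =
        !![((-δ / (c*μ) : ℝ) : ℂ), 0, ((1/c : ℝ) : ℂ), 0;
           ((a/(c*μ) : ℝ) : ℂ), ((-Rs/(c*μ) : ℝ) : ℂ), 0, 0;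
           0, 0, 0, 1;
           0, ((-(k*α*β*lam)/(μ*Dv) : ℝ) : ℂ), ((δv/(μ*Dv) : ℝ) : ℂ), ((c/Dv : ℝ) : ℂ)] := by
      rw [hA]; ext i j
      fin_cases i <;> fin_cases j <;>
        simp [Matrix.map_apply, Matrix.vecHead, Matrix.vecTail]
    rw [hA2, charpoly_eval_aux, hd0def, hr1def, hC2def, hDddef, hEdef, ha1def, hKdef]
    have hcC : (c:ℂ) ≠ 0 := Complex.ofReal_ne_zero.mpr hc.ne'
    have hμC : (μ:ℂ) ≠ 0 := Complex.ofReal_ne_zero.mpr hμ.ne'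
    have hDvC : (Dv:ℂ) ≠ 0 := Complex.ofReal_ne_zero.mpr hDv.ne'
    push_cast
    ring
  constructor
  · -- part 1 : a real root > 1
    have hf1 : (1+d0)*(1+r1)*(1^2 - C2*1 - Dd) + E < 0 := by
      have p1 : a1 < c*((1+d0)*(1+r1)) := lem_ecuv 1 d0 r1 a1 c hc ha1pos one_pos hd0c hr1a
      have p2 : K < C2 + Dd - 1 := by linarith
      have key : a1 * K < (c*((1+d0)*(1+r1))) * (C2 + Dd - 1) :=
        mul_lt_mul' p1.le p2 hKpos.le (by positivity)
      rw [← hcE] at key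
      have key2 : E < ((1+d0)*(1+r1)) * (C2 + Dd - 1) := by
        have := (mul_lt_mul_iff_right₀ hc).mp (by linarith [key] :
          c * E < c * (((1+d0)*(1+r1)) * (C2 + Dd - 1)))
        exact this
      have e : (1+d0)*(1+r1)*(1^2 - C2*1 - Dd) = -(((1+d0)*(1+r1)) * (C2 + Dd - 1)) := by
        ring
      linarith [key2, e]
    have hfM : 0 < ((C2+Dd+1)+d0)*((C2+Dd+1)+r1)*((C2+Dd+1)^2 - C2*(C2+Dd+1) - Dd) + E := by
      linarith [mul_pos (mul_pos (show (0:ℝ) < (C2+Dd+1)+d0 by linarith)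
        (show (0:ℝ) < (C2+Dd+1)+r1 by linarith))
        (show (0:ℝ) < (C2+Dd+1)^2 - C2*(C2+Dd+1) - Dd by
          linarith [mul_pos hC2pos hDdpos, sq_nonneg Dd]), hEpos]
    have hM1 : (1:ℝ) ≤ C2+Dd+1 := by linarith
    have hcont : ContinuousOn (fun tt:ℝ => (tt+d0)*(tt+r1)*(tt^2 - C2*tt - Dd) + E)
        (Set.Icc 1 (C2+Dd+1)) := by fun_prop
    obtain ⟨t, ht, hft⟩ := intermediate_value_Icc hM1 hcont ⟨hf1.le, hfM.le⟩
    have hft' : (t+d0)*(t+r1)*(t^2 - C2*t - Dd) + E = 0 := hft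
    have ht1 : 1 < t := by
      rcases lt_or_eq_of_le ht.1 with h'|h'
      · exact h'
      · exfalso; rw [← h'] at hft'; linarith [hf1]
    refine ⟨t, ht1, ?_⟩
    have h0' := congrArg (fun r:ℝ => (r:ℂ)) hft'
    push_cast at h0'
    show Polynomial.eval ((t:ℝ):ℂ) ((A.map Complex.ofReal).charpoly) = 0
    rw [hchar]
    linear_combination h0'
  · -- part 2
    intro z hroot hzre
    have hval : (z + (d0:ℂ))*(z + (r1:ℂ))*(z^2 - (C2:ℂ)*z - (Dd:ℂ)) + (E:ℂ) = 0 := by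
      rw [← hchar]; exact hroot
    by_cases hgt : 1 < z.re
    · exact Or.inl hgt
    · right
      have hxle : z.re ≤ 1 := le_of_not_gt hgt
      have him : z.im = 0 := by
        by_contra hy
        rw [← Complex.re_add_im z] at hval
        have hre := congrArg Complex.re hval
        have him2 := congrArg Complex.im hval
        simp only [Complex.add_re, Complex.add_im, Complex.mul_re, Complex.mul_im,
          Complex.sub_re, Complex.sub_im, Complex.ofReal_re, Complex.ofReal_im,
          Complex.I_re, Complex.I_im, Complex.zero_re, Complex.zero_im, pow_two,
          mul_zero, zero_mul, mul_one, one_mul, sub_zero, zero_sub, add_zero,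
          zero_add, neg_zero, neg_neg] at hre him2
        have hI : ((z.re+d0)*(z.re+r1) - z.im^2) * (2*z.re - C2)
            = (2*z.re+d0+r1) * (C2*z.re + Dd + z.im^2 - z.re^2) := by
          apply mul_left_cancel₀ hy
          linear_combination him2
        have hII : ((z.re+d0)*(z.re+r1) - z.im^2) * (C2*z.re + Dd + z.im^2 - z.re^2)
            + z.im^2*(2*z.re+d0+r1)*(2*z.re - C2) = E := by
          linear_combination (-1:ℝ) * hre
        exact aux_no_nonreal z.re z.im d0 r1 C2 Dd K a1 c E hc ha1pos hDdpos hKpos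
          hd0c hr1a hCa hzre hxle hcE hI hII
      refine ⟨him, ?_⟩
      have hzeq : z = ((z.re : ℝ) : ℂ) := by
        apply Complex.ext
        · simp
        · simp [him]
      rw [hzeq, Complex.norm_real, Real.norm_of_nonneg hzre.le]
      exact hxle
end
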